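/- Let p_n(x) be defined by p_0 = 1, p_1 = x, p_{n+1} = x·p_n + q^{1-2n}[n][n-1]·p_{n-1}, and p^{(n)} = p_n/[n]!. Then for every n ∈ ℕ and every ℓ ∈ ℤ, the evaluation p^{(n)}([2ℓ]) lies in ℤ[q, q^{-1}]. -/

import Mathlib

open Finset Polynomial

noncomputable def q : RatFunc ℚ := RatFunc.X

noncomputable def qa (n : ℤ) : RatFunc ℚ := (q ^ n - q ^ (-n)) / (q - q⁻¹)

noncomputable def qfac (n : ℕ) : RatFunc ℚ := ∏ k ∈ Finset.range n, qa ((k : ℤ) + 1)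

noncomputable def qbin (a : ℤ) (n : ℕ) : RatFunc ℚ :=
  ∏ k ∈ Finset.range n, qa (a - (k : ℤ)) / qa ((k : ℤ) + 1)

noncomputable def qa2 (n : ℤ) : RatFunc ℚ :=
  (q ^ (2 * n) - q ^ (-(2 * n))) / (q ^ (2 : ℤ) - q ^ (-2 : ℤ))

noncomputable def qbin2 (a : ℤ) (n : ℕ) : RatFunc ℚ :=
  ∏ k ∈ Finset.range n, qa2 (a - (k : ℤ)) / qa2 ((k : ℤ) + 1)

noncomputable def LaurentZ : Subring (RatFunc ℚ) := Subring.closure {q, q⁻¹}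

noncomputable def NatLaurent : Subsemiring (RatFunc ℚ) := Subsemiring.closure {q⁻¹}



-- basic nonvanishing
lemma q_ne_zero : q ≠ 0 := RatFunc.X_ne_zero

lemma q_pow_nat_ne_one (n : ℕ) (hn : n ≠ 0) : q ^ n ≠ 1 := by
  intro h
  have hX : (Polynomial.X : Polynomial ℚ) ^ n = 1 := by
    apply RatFunc.algebraMap_injective ℚ
    rw [map_pow, map_one, RatFunc.algebraMap_X]
    exact h
  have := congrArg Polynomial.natDegree hX
  rw [Polynomial.natDegree_X_pow, Polynomial.natDegree_one] at this
  exact hn this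

lemma qpow_ne_one (m : ℤ) (hm : m ≠ 0) : q ^ m ≠ 1 := by
  rcases lt_trichotomy m 0 with h | h | h
  · intro he
    have h2 : q ^ (-m) = 1 := by
      rw [← inv_inj, ← zpow_neg, neg_neg, he, inv_one]
    rw [show -m = ((-m).toNat : ℤ) by omega, zpow_natCast] at h2
    exact q_pow_nat_ne_one (-m).toNat (by omega) h2
  · exact absurd h hm
  · intro he
    rw [show m = (m.toNat : ℤ) by omega, zpow_natCast] at he
    exact q_pow_nat_ne_one m.toNat (by omega) he

lemma denom_ne_zero : q - q⁻¹ ≠ 0 := by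
  intro h
  have h2 : q * q = q * q⁻¹ := by
    have : q = q⁻¹ := by linear_combination h
    rw [← this]
  rw [mul_inv_cancel₀ q_ne_zero] at h2
  have : q ^ (2 : ℤ) = 1 := by
    rw [show (2:ℤ) = ((2:ℕ):ℤ) by norm_num, zpow_natCast, pow_two]; exact h2
  exact qpow_ne_one 2 (by norm_num) this

lemma qa_ne_zero (m : ℤ) (hm : m ≠ 0) : qa m ≠ 0 := by
  apply div_ne_zero _ denom_ne_zero
  intro h
  have h1 : q ^ m = q ^ (-m) := by linear_combination h
  have h2 : q ^ (2 * m) = 1 := by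
    rw [two_mul, zpow_add₀ q_ne_zero]
    nth_rewrite 2 [h1]
    rw [← zpow_add₀ q_ne_zero]
    simp
  exact qpow_ne_one (2 * m) (by omega) h2

lemma qfac_ne_zero (n : ℕ) : qfac n ≠ 0 := by
  apply Finset.prod_ne_zero_iff.2
  intro i _
  exact qa_ne_zero _ (by omega)

lemma qa_zero : qa 0 = 0 := by simp [qa]

lemma qa_one : qa 1 = 1 := by
  rw [qa, zpow_one, show ((-1 : ℤ)) = -1 from rfl, zpow_neg, zpow_one, div_self denom_ne_zero]

lemma qaE (x y : ℤ) : q ^ x * qa y = (q ^ (x + y) - q ^ (x - y)) / (q - q⁻¹) := by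
  rw [qa, ← mul_div_assoc, mul_sub, ← zpow_add₀ q_ne_zero, ← zpow_add₀ q_ne_zero]
  ring_nf

lemma keyAdd (a b c d g h : ℤ) (h1 : a + b = g + h) (h2 : a - b = c + d) (h3 : c - d = g - h) :
    q ^ a * qa b + q ^ c * qa d = q ^ g * qa h := by
  rw [qaE, qaE, qaE, h1, h2, h3, ← add_div]
  ring

lemma keySub (a b c d g h : ℤ) (h1 : a + b = g + h) (h2 : a - b = c - d) (h3 : c + d = g - h) :
    q ^ a * qa b - q ^ c * qa d = q ^ g * qa h := by
  rw [qaE, qaE, qaE, h1, h2, h3, div_sub_div_same]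
  ring

lemma key4 (a b c d e f g h : ℤ) (h1 : a + b = e + f) (h2 : a - b = c + d) (h3 : c - d = g - h)
    (h4 : e - f = g + h) :
    q ^ a * qa b + q ^ c * qa d = q ^ e * qa f + q ^ g * qa h := by
  rw [qaE, qaE, qaE, qaE, h1, h2, h3, h4, ← add_div, ← add_div]
  ring

lemma qa_split (u x : ℤ) : qa u = q ^ x * qa (u - x) + q ^ (x - u) * qa x := by
  have h := keyAdd x (u - x) (x - u) x 0 u (by ring) (by ring) (by ring)
  rw [zpow_zero, one_mul] at h
  exact h.symm

noncomputable def Af (l : ℤ) (m : ℕ) : RatFunc ℚ := (∏ i ∈ range m, qa (l + i)) / qfac m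

noncomputable def Bf (l : ℤ) (k : ℕ) : RatFunc ℚ := (∏ i ∈ range k, qa (l - i)) / qfac k

noncomputable def T (l : ℤ) (n : ℕ) : RatFunc ℚ :=
  ∑ k ∈ range (n + 1), q ^ (l * ((n : ℤ) - 2 * (k : ℤ))) * (Af l (n - k) * Bf l k)

lemma qfac_succ (n : ℕ) : qfac (n + 1) = qfac n * qa ((n : ℤ) + 1) := by
  rw [qfac, qfac, prod_range_succ]

lemma stepA (l : ℤ) (m : ℕ) : qa ((m : ℤ) + 1) * Af l (m + 1) = qa (l + m) * Af l m := by
  rw [Af, Af, prod_range_succ, qfac_succ]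
  have h1 : qa ((m : ℤ) + 1) ≠ 0 := qa_ne_zero _ (by omega)
  have h2 : qfac m ≠ 0 := qfac_ne_zero m
  field_simp

lemma stepB (l : ℤ) (k : ℕ) : qa ((k : ℤ) + 1) * Bf l (k + 1) = qa (l - k) * Bf l k := by
  rw [Bf, Bf, prod_range_succ, qfac_succ]
  have h1 : qa ((k : ℤ) + 1) ≠ 0 := qa_ne_zero _ (by omega)
  have h2 : qfac k ≠ 0 := qfac_ne_zero k
  field_simp

lemma BPascal (a : ℤ) (k : ℕ) :
    Bf (a + 1) (k + 1) = q ^ ((k : ℤ) + 1) * Bf a (k + 1) + q ^ ((k : ℤ) - a) * Bf a k := by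
  have hsc : qa (a + 1) = q ^ ((k : ℤ) + 1) * qa (a - k) + q ^ ((k : ℤ) - a) * qa ((k : ℤ) + 1) := by
    have h := keyAdd ((k : ℤ) + 1) (a - k) ((k : ℤ) - a) ((k : ℤ) + 1) 0 (a + 1)
      (by ring) (by ring) (by ring)
    rw [zpow_zero, one_mul] at h
    exact h.symm
  have hP : (∏ i ∈ range (k + 1), qa (a + 1 - (i : ℤ)))
      = (∏ i ∈ range k, qa (a - (i : ℤ))) * qa (a + 1) := by
    rw [prod_range_succ']
    congr 1
    · refine prod_congr rfl fun i _ => ?_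
      congr 1
      push_cast
      ring
    · congr 1
      push_cast
      ring
  rw [Bf, Bf, Bf, hP, prod_range_succ, qfac_succ, hsc]
  have h1 : qa ((k : ℤ) + 1) ≠ 0 := qa_ne_zero _ (by omega)
  have h2 : qfac k ≠ 0 := qfac_ne_zero k
  field_simp

lemma expand1 (u x e : ℤ) (Av Bv : RatFunc ℚ) :
    qa u * (q ^ e * (Av * Bv))
      = q ^ (e + x) * (qa (u - x) * Av) * Bv + q ^ (e + (x - u)) * (Av * (qa x * Bv)) := by
  rw [qa_split u x, zpow_add₀ q_ne_zero e x, zpow_add₀ q_ne_zero e (x - u)]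
  ring

lemma coefId (l u x : ℤ) :
    q ^ (l * (u + 1 - 2 * x) + x) * qa (l + u - x)
      + q ^ (l * (u - 1 - 2 * x) + x - u) * qa (l - x)
    = q ^ (l * (u - 2 * x) + u) * qa (2 * l)
      + (q ^ (l * (u - 2 * x) + x - 2 * l) * qa (u - x)
        - q ^ (l * (u - 2 * x) + x - u) * qa x) := by
  have E1 := keyAdd (l * (u - 2 * x) + x - u) x (l * (u - 1 - 2 * x) + x - u) (l - x)
    (l * (u - 1 - 2 * x) + 2 * x - u) l (by ring) (by ring) (by ring)
  have E2 := key4 (l * (u + 1 - 2 * x) + x) (l + u - x) (l * (u - 1 - 2 * x) + 2 * x - u) l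
    (l * (u - 2 * x) + u) (2 * l) (l * (u - 2 * x) + x - 2 * l) (u - x)
    (by ring) (by ring) (by ring) (by ring)
  linear_combination E1 + E2

lemma coefId2 (l u x : ℤ) :
    q ^ (l * (u - 2 * x) + x - 2 * l) * qa (l + u - x - 1)
      - q ^ (l * (u - 2 * x - 2) + x + 1 - u) * qa (l - x)
    = q ^ (l * (u - 1 - 2 * x)) * qa (u - 1) :=
  keySub _ _ _ _ _ _ (by ring) (by ring) (by ring)

lemma coefId' (l M x : ℤ) :
    q ^ (l * (M + 2 - 2 * x) + x) * qa (l + (M + 1 - x))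
      + q ^ (l * (M - 2 * x) + (x - (M + 1))) * qa (l - x)
    = q ^ (l * (M + 1 - 2 * x) + (M + 1)) * qa (2 * l)
      + (q ^ (l * (M + 1 - 2 * x) + x - 2 * l) * qa (M + 1 - x)
        - q ^ (l * (M + 1 - 2 * x) + x - (M + 1)) * qa x) := by
  have E1 := keyAdd (l * (M + 1 - 2 * x) + x - (M + 1)) x (l * (M - 2 * x) + (x - (M + 1)))
    (l - x) (l * (M - 2 * x) + 2 * x - (M + 1)) l (by ring) (by ring) (by ring)
  have E2 := key4 (l * (M + 2 - 2 * x) + x) (l + (M + 1 - x))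
    (l * (M - 2 * x) + 2 * x - (M + 1)) l
    (l * (M + 1 - 2 * x) + (M + 1)) (2 * l) (l * (M + 1 - 2 * x) + x - 2 * l) (M + 1 - x)
    (by ring) (by ring) (by ring) (by ring)
  linear_combination E1 + E2

lemma coefId2' (l M x : ℤ) :
    q ^ (l * (M + 1 - 2 * x) + x - 2 * l) * qa (l + (M - x))
      - q ^ (l * (M - 1 - 2 * x) + (x - M)) * qa (l - x)
    = q ^ (l * (M - 2 * x)) * qa M :=
  keySub _ _ _ _ _ _ (by ring) (by ring) (by ring)

lemma Trec (l : ℤ) (m : ℕ) :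
    qa ((m : ℤ) + 2) * T l (m + 2)
      = q ^ ((m : ℤ) + 1) * qa (2 * l) * T l (m + 1) + qa (m : ℤ) * T l m := by
  have hS1 : qa ((m : ℤ) + 2) * T l (m + 2)
      = (∑ k ∈ range (m + 2 + 1), (q ^ (l * ((m : ℤ) + 2 - 2 * (k : ℤ)) + (k : ℤ))
            * (qa ((m : ℤ) + 2 - (k : ℤ)) * Af l (m + 2 - k)) * Bf l k
          + q ^ (l * ((m : ℤ) + 2 - 2 * (k : ℤ)) + ((k : ℤ) - ((m : ℤ) + 2)))
            * (Af l (m + 2 - k) * (qa (k : ℤ) * Bf l k)))) := by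
    rw [T, mul_sum]
    refine sum_congr rfl fun k hk => ?_
    rw [show (((m + 2 : ℕ) : ℤ)) = (m : ℤ) + 2 by push_cast; ring]
    exact expand1 ((m : ℤ) + 2) (k : ℤ) (l * ((m : ℤ) + 2 - 2 * (k : ℤ)))
      (Af l (m + 2 - k)) (Bf l k)
  have hS2 : (∑ k ∈ range (m + 2 + 1), q ^ (l * ((m : ℤ) + 2 - 2 * (k : ℤ)) + (k : ℤ))
        * (qa ((m : ℤ) + 2 - (k : ℤ)) * Af l (m + 2 - k)) * Bf l k)
      = ∑ k ∈ range (m + 1 + 1), q ^ (l * ((m : ℤ) + 2 - 2 * (k : ℤ)) + (k : ℤ))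
        * (qa (l + ((m : ℤ) + 1 - (k : ℤ))) * Af l (m + 1 - k)) * Bf l k := by
    rw [sum_range_succ]
    have hz : qa ((m : ℤ) + 2 - ((m + 2 : ℕ) : ℤ)) = 0 := by
      rw [show (m : ℤ) + 2 - ((m + 2 : ℕ) : ℤ) = 0 by push_cast; ring]; exact qa_zero
    simp only [hz, zero_mul, mul_zero, add_zero]
    refine sum_congr rfl fun k hk => ?_
    rw [mem_range] at hk
    have hidx : m + 2 - k = (m + 1 - k) + 1 := by omega
    have harg : (m : ℤ) + 2 - (k : ℤ) = ((m + 1 - k : ℕ) : ℤ) + 1 := by omega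
    rw [hidx, harg]
    have hA := stepA l (m + 1 - k)
    rw [show l + ((m + 1 - k : ℕ) : ℤ) = l + ((m : ℤ) + 1 - (k : ℤ)) by omega] at hA
    rw [hA]
  have hS3 : (∑ k ∈ range (m + 2 + 1), q ^ (l * ((m : ℤ) + 2 - 2 * (k : ℤ)) + ((k : ℤ) - ((m : ℤ) + 2)))
        * (Af l (m + 2 - k) * (qa (k : ℤ) * Bf l k)))
      = ∑ k ∈ range (m + 1 + 1), q ^ (l * ((m : ℤ) - 2 * (k : ℤ)) + ((k : ℤ) - ((m : ℤ) + 1)))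
        * (Af l (m + 1 - k) * (qa (l - (k : ℤ)) * Bf l k)) := by
    rw [sum_range_succ']
    simp only [Nat.cast_zero, qa_zero, zero_mul, mul_zero, add_zero]
    refine sum_congr rfl fun k hk => ?_
    rw [mem_range] at hk
    have hidx : m + 2 - (k + 1) = m + 1 - k := by omega
    rw [hidx, show ((k + 1 : ℕ) : ℤ) = (k : ℤ) + 1 by push_cast; ring, stepB l k]
    rw [show l * ((m : ℤ) + 2 - 2 * ((k : ℤ) + 1)) + (((k : ℤ) + 1) - ((m : ℤ) + 2))
        = l * ((m : ℤ) - 2 * (k : ℤ)) + ((k : ℤ) - ((m : ℤ) + 1)) by ring]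
  have hS4 : qa ((m : ℤ) + 2) * T l (m + 2)
      = (∑ k ∈ range (m + 1 + 1), q ^ (l * ((m : ℤ) + 1 - 2 * (k : ℤ)) + ((m : ℤ) + 1))
            * qa (2 * l) * (Af l (m + 1 - k) * Bf l k))
        + ((∑ k ∈ range (m + 1 + 1), q ^ (l * ((m : ℤ) + 1 - 2 * (k : ℤ)) + (k : ℤ) - 2 * l)
            * qa ((m : ℤ) + 1 - (k : ℤ)) * (Af l (m + 1 - k) * Bf l k))
          - ∑ k ∈ range (m + 1 + 1), q ^ (l * ((m : ℤ) + 1 - 2 * (k : ℤ)) + (k : ℤ) - ((m : ℤ) + 1))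
            * qa (k : ℤ) * (Af l (m + 1 - k) * Bf l k)) := by
    rw [hS1, sum_add_distrib, hS2, hS3, ← sum_add_distrib, ← sum_sub_distrib, ← sum_add_distrib]
    refine sum_congr rfl fun k hk => ?_
    have h := coefId' l (m : ℤ) (k : ℤ)
    linear_combination (Af l (m + 1 - k) * Bf l k) * h
  have hQ1 : (∑ k ∈ range (m + 1 + 1), q ^ (l * ((m : ℤ) + 1 - 2 * (k : ℤ)) + ((m : ℤ) + 1))
        * qa (2 * l) * (Af l (m + 1 - k) * Bf l k))
      = q ^ ((m : ℤ) + 1) * qa (2 * l) * T l (m + 1) := by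
    rw [T, mul_sum]
    refine sum_congr rfl fun k hk => ?_
    rw [show (((m + 1 : ℕ) : ℤ)) = (m : ℤ) + 1 by push_cast; ring]
    rw [zpow_add₀ q_ne_zero]
    ring
  have hQ2 : (∑ k ∈ range (m + 1 + 1), q ^ (l * ((m : ℤ) + 1 - 2 * (k : ℤ)) + (k : ℤ) - 2 * l)
        * qa ((m : ℤ) + 1 - (k : ℤ)) * (Af l (m + 1 - k) * Bf l k))
      - (∑ k ∈ range (m + 1 + 1), q ^ (l * ((m : ℤ) + 1 - 2 * (k : ℤ)) + (k : ℤ) - ((m : ℤ) + 1))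
        * qa (k : ℤ) * (Af l (m + 1 - k) * Bf l k))
      = qa (m : ℤ) * T l m := by
    have h1 : (∑ k ∈ range (m + 1 + 1), q ^ (l * ((m : ℤ) + 1 - 2 * (k : ℤ)) + (k : ℤ) - 2 * l)
          * qa ((m : ℤ) + 1 - (k : ℤ)) * (Af l (m + 1 - k) * Bf l k))
        = ∑ k ∈ range (m + 1), q ^ (l * ((m : ℤ) + 1 - 2 * (k : ℤ)) + (k : ℤ) - 2 * l)
          * qa (l + ((m : ℤ) - (k : ℤ))) * (Af l (m - k) * Bf l k) := by
      rw [sum_range_succ]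
      have hz : qa ((m : ℤ) + 1 - ((m + 1 : ℕ) : ℤ)) = 0 := by
        rw [show (m : ℤ) + 1 - ((m + 1 : ℕ) : ℤ) = 0 by omega]; exact qa_zero
      simp only [hz, zero_mul, mul_zero, add_zero]
      refine sum_congr rfl fun k hk => ?_
      rw [mem_range] at hk
      have hidx : m + 1 - k = (m - k) + 1 := by omega
      have harg : (m : ℤ) + 1 - (k : ℤ) = ((m - k : ℕ) : ℤ) + 1 := by omega
      rw [hidx, harg]
      have hA := stepA l (m - k)
      rw [show l + ((m - k : ℕ) : ℤ) = l + ((m : ℤ) - (k : ℤ)) by omega] at hA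
      linear_combination (q ^ (l * ((m : ℤ) + 1 - 2 * (k : ℤ)) + (k : ℤ) - 2 * l) * Bf l k) * hA
    have h2 : (∑ k ∈ range (m + 1 + 1), q ^ (l * ((m : ℤ) + 1 - 2 * (k : ℤ)) + (k : ℤ) - ((m : ℤ) + 1))
          * qa (k : ℤ) * (Af l (m + 1 - k) * Bf l k))
        = ∑ k ∈ range (m + 1), q ^ (l * ((m : ℤ) - 1 - 2 * (k : ℤ)) + ((k : ℤ) - (m : ℤ)))
          * qa (l - (k : ℤ)) * (Af l (m - k) * Bf l k) := by
      rw [sum_range_succ']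
      simp only [Nat.cast_zero, qa_zero, zero_mul, mul_zero, add_zero]
      refine sum_congr rfl fun k hk => ?_
      rw [mem_range] at hk
      have hidx : m + 1 - (k + 1) = m - k := by omega
      rw [hidx, show ((k + 1 : ℕ) : ℤ) = (k : ℤ) + 1 by push_cast; ring]
      have hB := stepB l k
      rw [show l * ((m : ℤ) + 1 - 2 * ((k : ℤ) + 1)) + ((k : ℤ) + 1) - ((m : ℤ) + 1)
          = l * ((m : ℤ) - 1 - 2 * (k : ℤ)) + ((k : ℤ) - (m : ℤ)) by ring]
      linear_combination (q ^ (l * ((m : ℤ) - 1 - 2 * (k : ℤ)) + ((k : ℤ) - (m : ℤ))) * Af l (m - k)) * hB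
    rw [h1, h2, ← sum_sub_distrib, T, mul_sum]
    refine sum_congr rfl fun k hk => ?_
    have h := coefId2' l (m : ℤ) (k : ℤ)
    linear_combination (Af l (m - k) * Bf l k) * h
  rw [hS4, hQ1, hQ2]

lemma q_mem : q ∈ LaurentZ := Subring.subset_closure (by simp)

lemma qinv_mem : q⁻¹ ∈ LaurentZ := Subring.subset_closure (by simp)

lemma qpow_mem (m : ℤ) : q ^ m ∈ LaurentZ := by
  rcases le_or_gt 0 m with h | h
  · rw [show m = (m.toNat : ℤ) by omega, zpow_natCast]
    exact pow_mem q_mem _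
  · have : q ^ m = (q⁻¹) ^ (-m).toNat := by
      rw [inv_pow, ← zpow_natCast, show (((-m).toNat : ℕ) : ℤ) = -m by omega, zpow_neg, inv_inv]
    rw [this]
    exact pow_mem qinv_mem _

lemma Bf_mem : ∀ (k : ℕ) (a : ℤ), Bf a k ∈ LaurentZ := by
  intro k
  induction k with
  | zero =>
    intro a
    have : Bf a 0 = 1 := by
      rw [Bf, qfac]
      simp
    rw [this]; exact one_mem _
  | succ k ih =>
    intro a
    induction a using Int.induction_on with
    | zero =>
      have hP : (∏ i ∈ range (k + 1), qa ((0 : ℤ) - (i : ℤ))) = 0 := by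
        apply prod_eq_zero (mem_range.2 (by omega : 0 < k + 1))
        norm_num [qa_zero]
      have : Bf 0 (k + 1) = 0 := by rw [Bf, hP, zero_div]
      rw [this]; exact zero_mem _
    | succ i ihp =>
      rw [BPascal (i : ℤ) k]
      exact add_mem (mul_mem (qpow_mem _) ihp) (mul_mem (qpow_mem _) (ih _))
    | pred i ihn =>
      have hp := BPascal (-(i : ℤ) - 1) k
      rw [show (-(i : ℤ) - 1 + 1) = -(i : ℤ) by ring] at hp
      have h2 : Bf (-(i : ℤ) - 1) (k + 1)
          = q ^ (-((k : ℤ) + 1)) * (Bf (-(i : ℤ)) (k + 1)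
            - q ^ ((k : ℤ) - (-(i : ℤ) - 1)) * Bf (-(i : ℤ) - 1) k) := by
        rw [hp]
        have hq1 : q ^ (-((k : ℤ) + 1)) * q ^ ((k : ℤ) + 1) = 1 := by
          rw [← zpow_add₀ q_ne_zero, show -((k : ℤ) + 1) + ((k : ℤ) + 1) = 0 by ring, zpow_zero]
        linear_combination (-(Bf (-(i : ℤ) - 1) (k + 1))) * hq1
      rw [h2]
      exact mul_mem (qpow_mem _) (sub_mem ihn (mul_mem (qpow_mem _) (ih _)))

lemma qa_neg (x : ℤ) : qa (-x) = -qa x := by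
  rw [qa, qa, neg_neg]
  ring

lemma Af_eq (l : ℤ) (m : ℕ) : Af l m = (-1 : RatFunc ℚ) ^ m * Bf (-l) m := by
  rw [Af, Bf]
  have hP : (∏ i ∈ range m, qa (l + (i : ℤ)))
      = (-1 : RatFunc ℚ) ^ m * ∏ i ∈ range m, qa (-l - (i : ℤ)) := by
    rw [show ((-1 : RatFunc ℚ)) ^ m = ∏ _i ∈ range m, (-1 : RatFunc ℚ) by
      rw [prod_const, card_range], ← prod_mul_distrib]
    refine prod_congr rfl fun i _ => ?_
    rw [show (-l - (i : ℤ)) = -(l + (i : ℤ)) by ring, qa_neg]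
    ring
  rw [hP, mul_div_assoc]

lemma Af_mem (l : ℤ) (m : ℕ) : Af l m ∈ LaurentZ := by
  rw [Af_eq]
  exact mul_mem (pow_mem (neg_mem (one_mem _)) m) (Bf_mem m (-l))

lemma T_mem (l : ℤ) (n : ℕ) : T l n ∈ LaurentZ := by
  rw [T]
  exact sum_mem fun k _ => mul_mem (qpow_mem _) (mul_mem (Af_mem l _) (Bf_mem _ l))

def Ex : ℕ → ℕ
  | 0 => 0
  | n + 1 => Ex n + n

lemma main_lemma (p : ℕ → Polynomial (RatFunc ℚ))
    (hp0 : p 0 = 1) (hp1 : p 1 = Polynomial.X)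
    (hrec : ∀ n : ℕ, 1 ≤ n →
      p (n + 1) = Polynomial.X * p n
        + Polynomial.C (q ^ (1 - 2 * (n : ℤ)) * qa n * qa ((n : ℤ) - 1)) * p (n - 1))
    (l : ℤ) :
    ∀ n : ℕ, Polynomial.eval (qa (2 * l)) (p n)
      = qfac n * (q ^ (-(Ex n : ℤ)) * T l n) := by
  have P0 : Polynomial.eval (qa (2 * l)) (p 0) = qfac 0 * (q ^ (-(Ex 0 : ℤ)) * T l 0) := by
    rw [hp0, Polynomial.eval_one]
    have h1 : qfac 0 = 1 := by rw [qfac]; simp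
    have h2 : T l 0 = 1 := by
      rw [T, sum_range_one]
      have hA : Af l 0 = 1 := by rw [Af, qfac]; simp
      have hB : Bf l 0 = 1 := by rw [Bf, qfac]; simp
      rw [hA, hB]
      norm_num
    rw [h1, h2]
    norm_num [Ex]
  have P1 : Polynomial.eval (qa (2 * l)) (p 1) = qfac 1 * (q ^ (-(Ex 1 : ℤ)) * T l 1) := by
    rw [hp1, Polynomial.eval_X]
    have hf : qfac 1 = 1 := by
      rw [qfac, prod_range_one, show ((0 : ℕ) : ℤ) + 1 = 1 by norm_num, qa_one]
    have hA1 : Af l 1 = qa l := by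
      rw [Af, prod_range_one, qfac, prod_range_one, show ((0 : ℕ) : ℤ) + 1 = 1 by norm_num,
        qa_one, show l + ((0 : ℕ) : ℤ) = l by norm_num, div_one]
    have hA0 : Af l 0 = 1 := by rw [Af, qfac]; simp
    have hB1 : Bf l 1 = qa l := by
      rw [Bf, prod_range_one, qfac, prod_range_one, show ((0 : ℕ) : ℤ) + 1 = 1 by norm_num,
        qa_one, show l - ((0 : ℕ) : ℤ) = l by norm_num, div_one]
    have hB0 : Bf l 0 = 1 := by rw [Bf, qfac]; simp
    have hT : T l 1 = qa (2 * l) := by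
      rw [T, sum_range_succ, sum_range_one, hA1, hA0, hB1, hB0]
      have hs := qa_split (2 * l) l
      rw [show (2 * l - l) = l by ring] at hs
      rw [hs]
      push_cast
      ring_nf
    rw [hf, hT, show (Ex 1 : ℤ) = 0 by norm_num [Ex]]
    norm_num
  intro n
  induction n using Nat.twoStepInduction with
  | zero => exact P0
  | one => exact P1
  | more n ih2 ih1 =>
    have hr := hrec (n + 1) (by omega)
    rw [show n + 1 - 1 = n by omega] at hr
    rw [hr]
    rw [Polynomial.eval_add, Polynomial.eval_mul, Polynomial.eval_mul, Polynomial.eval_X,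
      Polynomial.eval_C, ih1, ih2]
    have hT := Trec l n
    have hf2 : qfac (n + 2) = qfac n * qa ((n : ℤ) + 1) * qa ((n : ℤ) + 2) := by
      rw [qfac_succ, qfac_succ, show (((n + 1 : ℕ) : ℤ)) + 1 = (n : ℤ) + 2 by push_cast; ring]
    have hf1 : qfac (n + 1) = qfac n * qa ((n : ℤ) + 1) := qfac_succ n
    have e1 : q ^ (-(Ex (n + 2) : ℤ)) * q ^ ((n : ℤ) + 1) = q ^ (-(Ex (n + 1) : ℤ)) := by
      rw [← zpow_add₀ q_ne_zero]
      congr 1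
      have h : Ex (n + 2) = Ex (n + 1) + (n + 1) := rfl
      rw [h]
      push_cast
      ring
    have e2 : q ^ (-(Ex (n + 2) : ℤ)) = q ^ (1 - 2 * ((n : ℤ) + 1)) * q ^ (-(Ex n : ℤ)) := by
      rw [← zpow_add₀ q_ne_zero]
      congr 1
      have h : Ex (n + 2) = Ex n + n + (n + 1) := rfl
      rw [h]
      push_cast
      ring
    have hcast : ((n + 1 : ℕ) : ℤ) - 1 = (n : ℤ) := by push_cast; ring
    rw [hf2, hf1, hcast, show (((n + 1 : ℕ)) : ℤ) = (n : ℤ) + 1 by push_cast; ring]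
    linear_combination (-(qfac n * qa ((n : ℤ) + 1) * q ^ (-(Ex (n + 2) : ℤ)))) * hT
      + (-(qa (2 * l) * qfac n * qa ((n : ℤ) + 1) * T l (n + 1))) * e1
      + (-(qfac n * qa ((n : ℤ) + 1) * qa (n : ℤ) * T l n)) * e2


/-- p^{(n)}([2ℓ]) ∈ ℤ[q,q⁻¹] for all n ∈ ℕ, ℓ ∈ ℤ. -/
theorem stmt5 (p : ℕ → Polynomial (RatFunc ℚ))
    (hp0 : p 0 = 1) (hp1 : p 1 = Polynomial.X)
    (hrec : ∀ n : ℕ, 1 ≤ n →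
      p (n + 1) = Polynomial.X * p n
        + Polynomial.C (q ^ (1 - 2 * (n : ℤ)) * qa n * qa ((n : ℤ) - 1)) * p (n - 1)) :
    ∀ (n : ℕ) (ℓ : ℤ), Polynomial.eval (qa (2 * ℓ)) (p n) / qfac n ∈ LaurentZ := by
  intro n ℓ
  rw [main_lemma p hp0 hp1 hrec ℓ n, mul_div_cancel_left₀ _ (qfac_ne_zero n)]
  exact mul_mem (qpow_mem _) (T_mem ℓ n)
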